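/- arXiv:1805.09747 — 2 statements merged into one kernel-verified Lean document; each statement's English description precedes it below -/
import Mathlib

section
/- Let u_1, ..., u_n be unit vectors in ℝⁿ satisfying the ℓ₂² triangle inequality and the balance condition ∑_{i<j} ‖u_i - u_j‖² = n² (equivalently ∑_{i,j} u_iᵀu_j = 0). Then for any i, the number of j with ‖u_i - u_j‖² ≤ 1/8 is at most (14/15)n. -/
theorem ball_card_bound {n : ℕ} (hn : 0 < n) (u : Fin n → EuclideanSpace ℝ (Fin n))
    (hunit : ∀ i, ‖u i‖ = 1)
    (htri : ∀ i j k : Fin n, ‖u i - u j‖ ^ 2 + ‖u j - u k‖ ^ 2 ≥ ‖u i - u k‖ ^ 2)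
    (hbal : ∑ i, ∑ j, ‖u i - u j‖ ^ 2 = 2 * (n : ℝ) ^ 2) (i : Fin n) :
    ((Finset.univ.filter (fun j => ‖u i - u j‖ ^ 2 ≤ 1 / 8)).card : ℝ) ≤ 14 * n / 15 := by
  classical
  set S := Finset.univ.filter (fun j => ‖u i - u j‖ ^ 2 ≤ 1 / 8) with hSdef
  set m : ℝ := (S.card : ℝ) with hm
  -- every pairwise squared distance is at most 4
  have hd4 : ∀ j k : Fin n, ‖u j - u k‖ ^ 2 ≤ 4 := by
    intro j k
    have h1 := norm_sub_le (u j) (u k)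
    have h2 : (0:ℝ) ≤ ‖u j - u k‖ := norm_nonneg _
    rw [hunit j, hunit k] at h1
    nlinarith
  have hd0 : ∀ j k : Fin n, (0:ℝ) ≤ ‖u j - u k‖ ^ 2 := fun j k => sq_nonneg _
  -- inside S, pairwise squared distances are at most 1/4
  have hS14 : ∀ j ∈ S, ∀ k ∈ S, ‖u j - u k‖ ^ 2 ≤ 1/4 := by
    intro j hj k hk
    rw [hSdef, Finset.mem_filter] at hj hk
    have h := htri j i k
    have hji : ‖u j - u i‖ = ‖u i - u j‖ := norm_sub_rev _ _
    rw [hji] at h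
    linarith [hj.2, hk.2]
  -- rewrite total sum as a sum over the product
  have htot : ∑ p ∈ Finset.univ ×ˢ Finset.univ,
      ‖u p.1 - u p.2‖ ^ 2 = 2 * (n:ℝ) ^ 2 := by
    rw [Finset.sum_product]; exact hbal
  have hsub : S ×ˢ S ⊆ Finset.univ ×ˢ (Finset.univ : Finset (Fin n)) := by
    intro p _; simp
  -- split the sum
  have hsplit : ∑ p ∈ Finset.univ ×ˢ Finset.univ, ‖u p.1 - u p.2‖ ^ 2
      = ∑ p ∈ S ×ˢ S, ‖u p.1 - u p.2‖ ^ 2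
        + ∑ p ∈ (Finset.univ ×ˢ Finset.univ) \ (S ×ˢ S), ‖u p.1 - u p.2‖ ^ 2 :=
by rw [← Finset.sum_sdiff hsub]; ring
  have hA : ∑ p ∈ S ×ˢ S, ‖u p.1 - u p.2‖ ^ 2 ≤ m ^ 2 * (1/4) := by
    calc ∑ p ∈ S ×ˢ S, ‖u p.1 - u p.2‖ ^ 2
        ≤ ∑ _p ∈ S ×ˢ S, (1/4 : ℝ) := by
          apply Finset.sum_le_sum
          intro p hp
          rw [Finset.mem_product] at hp
          exact hS14 p.1 hp.1 p.2 hp.2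
      _ = m ^ 2 * (1/4) := by
          rw [Finset.sum_const, Finset.card_product, hm, nsmul_eq_mul]
          push_cast
          ring
  have hcard : ((((Finset.univ ×ˢ Finset.univ) \ (S ×ˢ S)).card : ℝ))
      = (n:ℝ)^2 - m^2 := by
    have hle : S.card ≤ n := by
      simpa using Finset.card_le_univ S
    rw [Finset.card_sdiff_of_subset hsub, Finset.card_product, Finset.card_product]
    simp only [Finset.card_univ, Fintype.card_fin]
    rw [Nat.cast_sub (Nat.mul_le_mul hle hle)]
    push_cast [hm]
    ring
  have hB : ∑ p ∈ (Finset.univ ×ˢ Finset.univ) \ (S ×ˢ S), ‖u p.1 - u p.2‖ ^ 2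
      ≤ 4 * ((n:ℝ)^2 - m^2) := by
    calc ∑ p ∈ (Finset.univ ×ˢ Finset.univ) \ (S ×ˢ S), ‖u p.1 - u p.2‖ ^ 2
        ≤ ∑ _p ∈ (Finset.univ ×ˢ Finset.univ) \ (S ×ˢ S), (4:ℝ) :=
          Finset.sum_le_sum (fun p _ => hd4 p.1 p.2)
      _ = 4 * ((n:ℝ)^2 - m^2) := by
          rw [Finset.sum_const, nsmul_eq_mul, hcard]; ring
  -- combine: 2n² ≤ m²/4 + 4(n² - m²)
  have hkey : 2 * (n:ℝ)^2 ≤ m^2 * (1/4) + 4 * ((n:ℝ)^2 - m^2) := by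
    rw [← htot, hsplit]; linarith
  -- so m² ≤ (8/15) n², hence m ≤ 14n/15
  have hm0 : (0:ℝ) ≤ m := by positivity
  have hn0 : (0:ℝ) < (n:ℝ) := by exact_mod_cast hn
  nlinarith [sq_nonneg (m + 14 * (n:ℝ) / 15), sq_nonneg (m - 14 * (n:ℝ) / 15)]
end

section
/- Let L(Y) be the Laplacian of a weighted graph with weight Y_{ij} + Y_{ji} ≥ 0 on edge {i,j}. Suppose for every i ∈ S\T and t ∈ T there is a collection of paths in G[S] of length at most l carrying a total flow of at least c'l/n from i to t, where the total flow through any directed edge (i,j) over all paths is at most Y_{ij}. Then for all X ∈ ℝⁿ: Xᵀ L(Y)|_S X ≥ (c'/n) ∑_{i∈S\T, t∈T} (X_i - X_t)². -/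
/-- The number of traversals of the directed edge `(a, b)` by the walk `γ`
(given as its list of vertices). -/
def dirEdgeCount {α : Type*} [DecidableEq α] (γ : List α) (a b : α) : ℕ :=
  (γ.zip γ.tail).count (a, b)

private lemma list_sq_sum_le (L : List ℝ) :
    L.sum ^ 2 ≤ (L.length : ℝ) * (L.map (fun x => x ^ 2)).sum := by
  induction L with
  | nil => simp
  | cons a L ih =>
    have hQ : 0 ≤ (L.map (fun x => x ^ 2)).sum :=
      List.sum_nonneg (by intro x hx; simp at hx; obtain ⟨y, _, rfl⟩ := hx; positivity)
    rcases L with _ | ⟨b, L'⟩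
    · simp
    set L := b :: L' with hL
    have hk1 : (1:ℝ) ≤ L.length := by simp [hL]
    have hk : (0:ℝ) ≤ L.length := by linarith
    simp only [List.sum_cons, List.map_cons, List.length_cons, Nat.cast_add, Nat.cast_one]
    nlinarith [sq_nonneg ((L.length : ℝ) * a - L.sum),
      mul_nonneg hk (sub_nonneg.2 ih), sub_nonneg.2 ih, hk1, ih]

private lemma telescope {n : ℕ} (X : Fin n → ℝ) :
    ∀ (γ : List (Fin n)) (i t : Fin n), γ.head? = some i → γ.getLast? = some t →
      ((γ.zip γ.tail).map (fun p => X p.1 - X p.2)).sum = X i - X t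
  | [], i, t => by simp
  | [a], i, t => by
      intro h1 h2
      simp at h1 h2
      subst h1; subst h2; simp
  | a :: b :: rest, i, t => by
      intro h1 h2
      simp only [List.head?_cons, Option.some.injEq] at h1
      subst h1
      rw [List.getLast?_cons_cons] at h2
      have h := telescope X (b :: rest) b t (by simp) h2
      simp only [List.tail_cons, List.zip_cons_cons, List.map_cons, List.sum_cons]
      simp only [List.tail_cons] at h
      rw [h]; ring

private lemma zip_tail_prop {α : Type*} {R : α → α → Prop} :
    ∀ {γ : List α}, List.Chain' R γ →
      ∀ p ∈ γ.zip γ.tail, R p.1 p.2 ∧ p.1 ∈ γ ∧ p.2 ∈ γ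
  | [], _, p, hp => by simp at hp
  | [a], _, p, hp => by simp at hp
  | a :: b :: rest, hc, p, hp => by
      simp only [List.Chain', List.isChain_cons_cons] at hc
      simp only [List.tail_cons, List.zip_cons_cons, List.mem_cons] at hp
      rcases hp with rfl | hp
      · exact ⟨hc.1, by simp, by simp⟩
      · have h := zip_tail_prop hc.2 p hp
        exact ⟨h.1, List.mem_cons_of_mem _ h.2.1, List.mem_cons_of_mem _ h.2.2⟩

private lemma count_instances {n : ℕ} (L : List (Fin n × Fin n)) (p : Fin n × Fin n) :
    @List.count _ instBEqOfDecidableEq p L = @List.count _ instBEqProd p L := by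
  unfold List.count
  refine List.countP_congr fun a _ => ?_
  by_cases h : a = p
  · subst h
    have h1 : (@BEq.beq _ instBEqOfDecidableEq a a) = true := by
      simp [instBEqOfDecidableEq]
    have h2 : (@BEq.beq _ instBEqProd a a) = true := by simp
    rw [h1, h2]
  · have h1 : (@BEq.beq _ instBEqOfDecidableEq a p) = false := by
      simp [instBEqOfDecidableEq, h]
    have h2 : (@BEq.beq _ instBEqProd a p) = false := by simp [h]
    rw [h1, h2]

private lemma edge_repr {n : ℕ} (G : SimpleGraph (Fin n)) [DecidableRel G.Adj]
    (S : Finset (Fin n)) (X : Fin n → ℝ) (γ : List (Fin n))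
    (hS : ∀ v ∈ γ, v ∈ S) (hc : List.Chain' G.Adj γ) :
    ((γ.zip γ.tail).map (fun p => (X p.1 - X p.2) ^ 2)).sum =
      ∑ p ∈ S ×ˢ S,
        (if G.Adj p.1 p.2 then (dirEdgeCount γ p.1 p.2 : ℝ) * (X p.1 - X p.2) ^ 2 else 0) := by
  set L := γ.zip γ.tail with hLdef
  have hprop := zip_tail_prop hc
  have hsub : L.toFinset ⊆ S ×ˢ S := by
    intro p hp
    rw [List.mem_toFinset] at hp
    have h := hprop p hp
    exact Finset.mem_product.2 ⟨hS _ h.2.1, hS _ h.2.2⟩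
  have hz : ∀ p ∈ S ×ˢ S, p ∉ L.toFinset →
      (if G.Adj p.1 p.2 then (dirEdgeCount γ p.1 p.2 : ℝ) * (X p.1 - X p.2) ^ 2 else 0) = 0 := by
    intro p _ hp
    rw [List.mem_toFinset] at hp
    have h0 : L.count p = 0 := List.count_eq_zero.2 hp
    have h0' : dirEdgeCount γ p.1 p.2 = 0 := by
      simpa [dirEdgeCount, ← hLdef] using h0
    simp [h0']
  rw [← Finset.sum_subset hsub hz, Finset.sum_list_map_count]
  refine Finset.sum_congr rfl fun p hp => ?_
  rw [List.mem_toFinset] at hp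
  have hadj : G.Adj p.1 p.2 := (hprop p hp).1
  rw [if_pos hadj, nsmul_eq_mul]
  congr 1
  norm_cast
  unfold dirEdgeCount
  rw [← hLdef, Prod.mk.eta]
  exact count_instances L p


private lemma esum_nonneg {n : ℕ} (X : Fin n → ℝ) (γ : List (Fin n)) :
    0 ≤ ((γ.zip γ.tail).map (fun p => (X p.1 - X p.2) ^ 2)).sum :=
  List.sum_nonneg (by intro x hx; simp at hx; obtain ⟨a, b, _, rfl⟩ := hx; positivity)

private lemma path_sq_bound {n : ℕ} (X : Fin n → ℝ) (γ : List (Fin n)) (i t : Fin n) (l : ℕ)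
    (h1 : γ.head? = some i) (h2 : γ.getLast? = some t) (h3 : γ.length ≤ l + 1) :
    (X i - X t) ^ 2 ≤ (l : ℝ) * ((γ.zip γ.tail).map (fun p => (X p.1 - X p.2) ^ 2)).sum := by
  have htel := telescope X γ i t h1 h2
  have hcs := list_sq_sum_le ((γ.zip γ.tail).map (fun p => X p.1 - X p.2))
  rw [htel] at hcs
  have hlen : (((γ.zip γ.tail).map (fun p => X p.1 - X p.2)).length : ℝ) ≤ l := by
    have : ((γ.zip γ.tail).map (fun p => X p.1 - X p.2)).length ≤ l := by
      rw [List.length_map, List.length_zip, List.length_tail]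
      omega
    exact_mod_cast this
  have hmapmap : (((γ.zip γ.tail).map (fun p => X p.1 - X p.2)).map (fun x => x ^ 2)).sum
      = ((γ.zip γ.tail).map (fun p => (X p.1 - X p.2) ^ 2)).sum := by
    rw [List.map_map]; rfl
  rw [hmapmap] at hcs
  calc (X i - X t) ^ 2 ≤ _ := hcs
    _ ≤ (l : ℝ) * _ := mul_le_mul_of_nonneg_right hlen (esum_nonneg X γ)

theorem flow_routing_suffices {n : ℕ} (hn : 0 < n)
    (G : SimpleGraph (Fin n)) [DecidableRel G.Adj]
    (S T : Finset (Fin n)) (hTS : T ⊆ S)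
    (Y : Fin n → Fin n → ℝ) (hY : ∀ a b, 0 ≤ Y a b)
    (l : ℕ) (hl : 0 < l) (c' : ℝ) (hc' : 0 ≤ c')
    -- the collection of flow paths from `i` to `t`, and the flow carried by each path
    (D : Fin n → Fin n → Finset (List (Fin n)))
    (f : Fin n → Fin n → List (Fin n) → ℝ)
    (hf0 : ∀ i t γ, γ ∈ D i t → 0 ≤ f i t γ)
    -- each path goes from `i` to `t`, has length at most `l`, stays in `S`,
    -- and follows edges of `G`
    (hpath : ∀ i ∈ S \ T, ∀ t ∈ T, ∀ γ ∈ D i t,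
      γ.head? = some i ∧ γ.getLast? = some t ∧ γ.length ≤ l + 1 ∧
        (∀ v ∈ γ, v ∈ S) ∧ List.Chain' G.Adj γ)
    -- each pair `(i, t)` receives a total flow of at least `c' l / n`
    (hflow : ∀ i ∈ S \ T, ∀ t ∈ T, c' * l / (n : ℝ) ≤ ∑ γ ∈ D i t, f i t γ)
    -- the total flow through any directed edge `(a, b)` is at most the capacity `Y a b`
    (hcap : ∀ a b : Fin n,
      (∑ i ∈ S \ T, ∑ t ∈ T, ∑ γ ∈ D i t, (dirEdgeCount γ a b : ℝ) * f i t γ) ≤ Y a b)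
    (X : Fin n → ℝ) :
    (c' / (n : ℝ)) * ∑ i ∈ S \ T, ∑ t ∈ T, (X i - X t) ^ 2 ≤
      (1 / 2) * ∑ a ∈ S, ∑ b ∈ S,
        (if G.Adj a b then (Y a b + Y b a) * (X a - X b) ^ 2 else 0) := by
  set E : List (Fin n) → ℝ :=
    fun γ => ((γ.zip γ.tail).map (fun p => (X p.1 - X p.2) ^ 2)).sum with hE
  have hlpos : (0:ℝ) < l := by exact_mod_cast hl
  -- Step 1: from the flow lower bound and Cauchy–Schwarz along each path
  have step1 : (c' / (n : ℝ)) * ∑ i ∈ S \ T, ∑ t ∈ T, (X i - X t) ^ 2 ≤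
      ∑ i ∈ S \ T, ∑ t ∈ T, ∑ γ ∈ D i t, f i t γ * E γ := by
    rw [Finset.mul_sum]
    refine Finset.sum_le_sum fun i hi => ?_
    rw [Finset.mul_sum]
    refine Finset.sum_le_sum fun t ht => ?_
    have hq := hflow i hi t ht
    have h2 : (∑ γ ∈ D i t, f i t γ) * (X i - X t) ^ 2 ≤
        (l:ℝ) * ∑ γ ∈ D i t, f i t γ * E γ := by
      rw [Finset.sum_mul, Finset.mul_sum]
      refine Finset.sum_le_sum fun γ hγ => ?_
      obtain ⟨p1, p2, p3, _, _⟩ := hpath i hi t ht γ hγ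
      calc f i t γ * (X i - X t) ^ 2
          ≤ f i t γ * ((l:ℝ) * E γ) :=
            mul_le_mul_of_nonneg_left (path_sq_bound X γ i t l p1 p2 p3) (hf0 i t γ hγ)
        _ = (l:ℝ) * (f i t γ * E γ) := by ring
    have h1 : c' * l / (n:ℝ) * (X i - X t) ^ 2 ≤
        (∑ γ ∈ D i t, f i t γ) * (X i - X t) ^ 2 :=
      mul_le_mul_of_nonneg_right hq (sq_nonneg _)
    have h3 : (l:ℝ) * (c' / (n:ℝ) * (X i - X t) ^ 2) ≤
        (l:ℝ) * ∑ γ ∈ D i t, f i t γ * E γ := by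
      calc (l:ℝ) * (c' / (n:ℝ) * (X i - X t) ^ 2)
          = c' * l / (n:ℝ) * (X i - X t) ^ 2 := by ring
        _ ≤ _ := le_trans h1 h2
    exact le_of_mul_le_mul_left h3 hlpos
  -- Step 2: from the capacity constraints
  have step2 : ∑ i ∈ S \ T, ∑ t ∈ T, ∑ γ ∈ D i t, f i t γ * E γ ≤
      ∑ p ∈ S ×ˢ S, (if G.Adj p.1 p.2 then Y p.1 p.2 * (X p.1 - X p.2) ^ 2 else 0) := by
    have expand : ∑ i ∈ S \ T, ∑ t ∈ T, ∑ γ ∈ D i t, f i t γ * E γ =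
        ∑ p ∈ S ×ˢ S, ∑ i ∈ S \ T, ∑ t ∈ T, ∑ γ ∈ D i t,
          (if G.Adj p.1 p.2 then
            (dirEdgeCount γ p.1 p.2 : ℝ) * f i t γ * (X p.1 - X p.2) ^ 2 else 0) := by
      calc ∑ i ∈ S \ T, ∑ t ∈ T, ∑ γ ∈ D i t, f i t γ * E γ
          = ∑ i ∈ S \ T, ∑ t ∈ T, ∑ γ ∈ D i t, ∑ p ∈ S ×ˢ S,
              (if G.Adj p.1 p.2 then
                (dirEdgeCount γ p.1 p.2 : ℝ) * f i t γ * (X p.1 - X p.2) ^ 2 else 0) := by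
            refine Finset.sum_congr rfl fun i hi => Finset.sum_congr rfl fun t ht =>
              Finset.sum_congr rfl fun γ hγ => ?_
            obtain ⟨_, _, _, hS, hc⟩ := hpath i hi t ht γ hγ
            have hEe : E γ = ∑ p ∈ S ×ˢ S,
                (if G.Adj p.1 p.2 then
                  (dirEdgeCount γ p.1 p.2 : ℝ) * (X p.1 - X p.2) ^ 2 else 0) :=
              edge_repr G S X γ hS hc
            rw [hEe, Finset.mul_sum]
            refine Finset.sum_congr rfl fun p hp => ?_
            split <;> ring
        _ = ∑ i ∈ S \ T, ∑ t ∈ T, ∑ p ∈ S ×ˢ S, ∑ γ ∈ D i t, _ :=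
            Finset.sum_congr rfl fun i _ => Finset.sum_congr rfl fun t _ => Finset.sum_comm
        _ = ∑ i ∈ S \ T, ∑ p ∈ S ×ˢ S, ∑ t ∈ T, ∑ γ ∈ D i t, _ :=
            Finset.sum_congr rfl fun i _ => Finset.sum_comm
        _ = _ := Finset.sum_comm
    rw [expand]
    refine Finset.sum_le_sum fun p hp => ?_
    by_cases hadj : G.Adj p.1 p.2
    · simp only [if_pos hadj]
      have : ∑ i ∈ S \ T, ∑ t ∈ T, ∑ γ ∈ D i t,
          (dirEdgeCount γ p.1 p.2 : ℝ) * f i t γ * (X p.1 - X p.2) ^ 2 =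
          (∑ i ∈ S \ T, ∑ t ∈ T, ∑ γ ∈ D i t,
            (dirEdgeCount γ p.1 p.2 : ℝ) * f i t γ) * (X p.1 - X p.2) ^ 2 := by
        rw [Finset.sum_mul]
        refine Finset.sum_congr rfl fun i _ => ?_
        rw [Finset.sum_mul]
        refine Finset.sum_congr rfl fun t _ => ?_
        rw [Finset.sum_mul]
      rw [this]
      exact mul_le_mul_of_nonneg_right (hcap p.1 p.2) (sq_nonneg _)
    · simp [hadj]
  -- Symmetrization of the right-hand side
  have rhs_eq : ∑ p ∈ S ×ˢ S, (if G.Adj p.1 p.2 then Y p.1 p.2 * (X p.1 - X p.2) ^ 2 else 0) =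
      (1 / 2) * ∑ a ∈ S, ∑ b ∈ S,
        (if G.Adj a b then (Y a b + Y b a) * (X a - X b) ^ 2 else 0) := by
    rw [Finset.sum_product]
    have hsym : ∑ a ∈ S, ∑ b ∈ S, (if G.Adj a b then Y b a * (X a - X b) ^ 2 else 0) =
        ∑ a ∈ S, ∑ b ∈ S, (if G.Adj a b then Y a b * (X a - X b) ^ 2 else 0) := by
      rw [Finset.sum_comm]
      refine Finset.sum_congr rfl fun a _ => Finset.sum_congr rfl fun b _ => ?_
      have h1 : G.Adj b a ↔ G.Adj a b := G.adj_comm b a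
      have h2 : (X b - X a) ^ 2 = (X a - X b) ^ 2 := by ring
      simp [h1, h2]
    have expand2 : ∑ a ∈ S, ∑ b ∈ S,
        (if G.Adj a b then (Y a b + Y b a) * (X a - X b) ^ 2 else 0) =
        (∑ a ∈ S, ∑ b ∈ S, (if G.Adj a b then Y a b * (X a - X b) ^ 2 else 0)) +
        ∑ a ∈ S, ∑ b ∈ S, (if G.Adj a b then Y b a * (X a - X b) ^ 2 else 0) := by
      rw [← Finset.sum_add_distrib]
      refine Finset.sum_congr rfl fun a _ => ?_
      rw [← Finset.sum_add_distrib]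
      refine Finset.sum_congr rfl fun b _ => ?_
      split <;> ring
    rw [expand2, hsym]; ring
  calc (c' / (n : ℝ)) * ∑ i ∈ S \ T, ∑ t ∈ T, (X i - X t) ^ 2
      ≤ _ := step1
    _ ≤ _ := step2
    _ = _ := rhs_eq
end
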